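/- Let I ≥ 2, W₀ > 0, let U : ℝ^I → ℝ be continuous, concave and monotonically increasing, and let V : ℝ^I → ℝ be continuous, monotonically increasing, strictly concave for non-equivalent wealth vectors, and satisfy the recession condition. Let x, y ∈ ℝ^I with U(y) ≥ U(W₀·e). Then the optimization problem maximize V(x + z) over z ∈ ℝ^I subject to U(y − z) ≥ U(W₀·e) admits an optimal solution, and this optimal solution is unique. -/

import Mathlib

open Filter Topology

lemma concave_of_strict {I : ℕ} (hI : 2 ≤ I) (V : (Fin I → ℝ) → ℝ)
    (hVcont : Continuous V)
    (hVsconc : ∀ x y : Fin I → ℝ, (¬ ∃ t : ℝ, y = x + t • (1 : Fin I → ℝ)) →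
      ∀ a : ℝ, 0 < a → a < 1 → a * V x + (1 - a) * V y < V (a • x + (1 - a) • y)) :
    ∀ p q : Fin I → ℝ, ∀ a : ℝ, 0 ≤ a → a ≤ 1 →
      a * V p + (1 - a) * V q ≤ V (a • p + (1 - a) • q) := by
  intro p q a ha0 ha1
  rcases eq_or_lt_of_le ha0 with h0 | h0
  · simp [← h0]
  rcases eq_or_lt_of_le ha1 with h1 | h1
  · simp [h1]
  by_cases hequiv : ∃ t : ℝ, q = p + t • (1 : Fin I → ℝ)
  · obtain ⟨t, ht⟩ := hequiv
    set i0 : Fin I := ⟨0, by omega⟩ with hi0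
    set i1 : Fin I := ⟨1, by omega⟩ with hi1
    have hi01 : i1 ≠ i0 := by simp [hi0, hi1, Fin.ext_iff]
    set u : Fin I → ℝ := Pi.single i0 1 with hu
    set qn : ℕ → (Fin I → ℝ) := fun n => q + ((n : ℝ) + 1)⁻¹ • u with hqn
    have hnen : ∀ n : ℕ, ¬ ∃ t' : ℝ, qn n = p + t' • (1 : Fin I → ℝ) := by
      rintro n ⟨t', ht'⟩
      have h0' := congrFun ht' i0
      have h1' := congrFun ht' i1
      simp [hqn, hu, ht, Pi.single_apply, hi01] at h0' h1'
      have hpos : (0:ℝ) < ((n : ℝ) + 1)⁻¹ := by positivity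
      rw [h1'] at h0'
      linarith
    have hstep : ∀ n : ℕ, a * V p + (1 - a) * V (qn n) ≤ V (a • p + (1 - a) • qn n) :=
      fun n => (hVsconc p (qn n) (hnen n) a h0 h1).le
    have hε : Tendsto (fun n : ℕ => ((n : ℝ) + 1)⁻¹) atTop (𝓝 0) := by
      simpa [one_div] using tendsto_one_div_add_atTop_nhds_zero_nat (𝕜 := ℝ)
    have hqlim : Tendsto qn atTop (𝓝 q) := by
      have h := (tendsto_const_nhds : Tendsto (fun _ : ℕ => q) atTop (𝓝 q)).add
        (hε.smul_const u)
      simpa using h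
    have hL : Tendsto (fun n => a * V p + (1 - a) * V (qn n)) atTop
        (𝓝 (a * V p + (1 - a) * V q)) :=
      tendsto_const_nhds.add (((hVcont.tendsto q).comp hqlim).const_mul _)
    have hR : Tendsto (fun n => V (a • p + (1 - a) • qn n)) atTop
        (𝓝 (V (a • p + (1 - a) • q))) :=
      (hVcont.tendsto _).comp (tendsto_const_nhds.add (hqlim.const_smul _))
    exact le_of_tendsto_of_tendsto' hL hR hstep
  · exact (hVsconc p q hequiv a h0 h1).le

set_option maxHeartbeats 1000000 in
/-- The one-round trading problem `P_j` admits a unique optimal solution. -/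
theorem stmt_1 (I : ℕ) (hI : 2 ≤ I) (W0 : ℝ) (hW0 : 0 < W0)
    (U V : (Fin I → ℝ) → ℝ)
    (hUcont : Continuous U) (hUconc : ConcaveOn ℝ Set.univ U)
    (hUmono : ∀ x y : Fin I → ℝ, x ≤ y → U x ≤ U y)
    (hUstrict : ∀ x y : Fin I → ℝ, x ≤ y → x ≠ y → U x < U y)
    (hVcont : Continuous V)
    (hVmono : ∀ x y : Fin I → ℝ, x ≤ y → V x ≤ V y)
    (hVstrict : ∀ x y : Fin I → ℝ, x ≤ y → x ≠ y → V x < V y)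
    (hVsconc : ∀ x y : Fin I → ℝ, (¬ ∃ t : ℝ, y = x + t • (1 : Fin I → ℝ)) →
      ∀ a : ℝ, 0 < a → a < 1 → a * V x + (1 - a) * V y < V (a • x + (1 - a) • y))
    (hVrecc : ∀ d : Fin I → ℝ,
      (∀ (x : Fin I → ℝ) (t : ℝ), 0 ≤ t → V x ≤ V (x + t • d)) → 0 ≤ d)
    (x y : Fin I → ℝ) (hy : U (W0 • (1 : Fin I → ℝ)) ≤ U y) :
    ∃! z : Fin I → ℝ, U (W0 • (1 : Fin I → ℝ)) ≤ U (y - z) ∧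
      ∀ z' : Fin I → ℝ, U (W0 • (1 : Fin I → ℝ)) ≤ U (y - z') → V (x + z') ≤ V (x + z) := by
  set β : ℝ := U (W0 • (1 : Fin I → ℝ)) with hβ
  have Vconc := concave_of_strict hI V hVcont hVsconc
  have Uconc : ∀ p q : Fin I → ℝ, ∀ a : ℝ, 0 ≤ a → a ≤ 1 →
      a * U p + (1 - a) * U q ≤ U (a • p + (1 - a) • q) := by
    intro p q a ha0 ha1
    have := hUconc.2 (Set.mem_univ p) (Set.mem_univ q) ha0 (by linarith : (0:ℝ) ≤ 1 - a)
      (by ring)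
    simpa [smul_eq_mul] using this
  -- the restricted feasible set
  set S : Set (Fin I → ℝ) := {z | β ≤ U (y - z) ∧ V x ≤ V (x + z)} with hS
  have hS0 : (0 : Fin I → ℝ) ∈ S := by
    constructor
    · simpa using hy
    · simp
  have hSclosed : IsClosed S := by
    apply IsClosed.inter
    · exact isClosed_le continuous_const (hUcont.comp (continuous_const.sub continuous_id))
    · exact isClosed_le continuous_const (hVcont.comp (continuous_const.add continuous_id))
  -- convex combination identities
  have idU : ∀ (z1 z2 : Fin I → ℝ) (a : ℝ),
      y - (a • z1 + (1 - a) • z2) = a • (y - z1) + (1 - a) • (y - z2) := by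
    intro z1 z2 a; module
  have idV : ∀ (z1 z2 : Fin I → ℝ) (a : ℝ),
      x + (a • z1 + (1 - a) • z2) = a • (x + z1) + (1 - a) • (x + z2) := by
    intro z1 z2 a; module
  have hSconv : ∀ z1 ∈ S, ∀ z2 ∈ S, ∀ a : ℝ, 0 ≤ a → a ≤ 1 →
      a • z1 + (1 - a) • z2 ∈ S := by
    rintro z1 ⟨hU1, hV1⟩ z2 ⟨hU2, hV2⟩ a ha0 ha1
    constructor
    · rw [idU]
      calc β = a * β + (1 - a) * β := by ring
      _ ≤ a * U (y - z1) + (1 - a) * U (y - z2) := by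
          have h1 : (0:ℝ) ≤ 1 - a := by linarith
          exact add_le_add (mul_le_mul_of_nonneg_left hU1 ha0)
            (mul_le_mul_of_nonneg_left hU2 h1)
      _ ≤ _ := Uconc _ _ a ha0 ha1
    · rw [idV]
      calc V x = a * V x + (1 - a) * V x := by ring
      _ ≤ a * V (x + z1) + (1 - a) * V (x + z2) := by
          have h1 : (0:ℝ) ≤ 1 - a := by linarith
          exact add_le_add (mul_le_mul_of_nonneg_left hV1 ha0)
            (mul_le_mul_of_nonneg_left hV2 h1)
      _ ≤ _ := Vconc _ _ a ha0 ha1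
  -- S is bounded
  have hSbdd : Bornology.IsBounded S := by
    by_contra hub
    rw [isBounded_iff_forall_norm_le] at hub
    push_neg at hub
    choose z hzS hzn using fun n : ℕ => hub n
    have hznpos : ∀ n : ℕ, (0:ℝ) < ‖z n‖ := fun n =>
      lt_of_le_of_lt (Nat.cast_nonneg n) (hzn n)
    set dn : ℕ → (Fin I → ℝ) := fun n => ‖z n‖⁻¹ • z n with hdn
    have hdnS : ∀ n, dn n ∈ Metric.sphere (0 : Fin I → ℝ) 1 := by
      intro n
      simp [hdn, norm_smul, abs_of_pos (inv_pos.2 (hznpos n)),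
        inv_mul_cancel₀ (hznpos n).ne']
    obtain ⟨d, hdmem, φ, hφ, hdlim⟩ := (isCompact_sphere (0 : Fin I → ℝ) 1).tendsto_subseq hdnS
    have hd1 : ‖d‖ = 1 := by simpa using hdmem
    have hdne : d ≠ 0 := by intro h; rw [h] at hd1; simp at hd1
    -- the ray from 0 in direction d stays in S
    have hray : ∀ t : ℝ, 0 ≤ t → t • d ∈ S := by
      intro t ht
      have hmem : ∀ᶠ n in atTop, t • (dn ∘ φ) n ∈ S := by
        filter_upwards [eventually_ge_atTop ⌈t⌉₊] with n hn
        have hnt : t ≤ ‖z (φ n)‖ := by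
          have h1 : (n : ℝ) ≤ (φ n : ℝ) := by exact_mod_cast hφ.le_apply
          have h2 : t ≤ (⌈t⌉₊ : ℝ) := Nat.le_ceil t
          have h3 : ((⌈t⌉₊ : ℕ) : ℝ) ≤ (n : ℝ) := by exact_mod_cast hn
          linarith [hzn (φ n)]
        set c := ‖z (φ n)‖
        have hc : (0:ℝ) < c := hznpos (φ n)
        have hlam0 : 0 ≤ t * c⁻¹ := mul_nonneg ht (inv_pos.2 hc).le
        have hlam1 : t * c⁻¹ ≤ 1 := by
          rw [mul_inv_le_iff₀ hc]; simpa using hnt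
        have := hSconv (z (φ n)) (hzS (φ n)) 0 hS0 (t * c⁻¹) hlam0 hlam1
        simpa [hdn, smul_smul, Function.comp] using this
      have hlim : Tendsto (fun n => t • (dn ∘ φ) n) atTop (𝓝 (t • d)) :=
        hdlim.const_smul t
      exact hSclosed.mem_of_tendsto hlim hmem
    -- V is bounded below on every ray in direction d
    have hVlow : ∀ (x' : Fin I → ℝ) (t : ℝ), 0 ≤ t →
        (V x + V ((2:ℝ) • x' - x)) / 2 ≤ V (x' + t • d) := by
      intro x' t ht
      have hid : x' + t • d
          = (1/2 : ℝ) • (x + (2*t) • d) + (1 - (1/2 : ℝ)) • ((2:ℝ) • x' - x) := by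
        module
      have h1 : V x ≤ V (x + (2*t) • d) := (hray (2*t) (by linarith)).2
      have h2 := Vconc (x + (2*t) • d) ((2:ℝ) • x' - x) (1/2) (by norm_num) (by norm_num)
      rw [hid]
      calc (V x + V ((2:ℝ) • x' - x)) / 2
          ≤ (V (x + (2*t) • d) + V ((2:ℝ) • x' - x)) / 2 := by linarith
        _ = (1/2) * V (x + (2*t) • d) + (1 - 1/2) * V ((2:ℝ) • x' - x) := by ring
        _ ≤ _ := h2
    -- V is nondecreasing along direction d everywhere
    have hVnondec : ∀ (x' : Fin I → ℝ) (t : ℝ), 0 ≤ t → V x' ≤ V (x' + t • d) := by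
      intro x' t0 ht0
      by_contra hlt
      push_neg at hlt
      have ht0' : 0 < t0 := by
        rcases eq_or_lt_of_le ht0 with h | h
        · exfalso; rw [← h] at hlt; simp at hlt
        · exact h
      set δ : ℝ := V x' - V (x' + t0 • d) with hδ
      have hδpos : 0 < δ := by simp [hδ]; linarith
      set c : ℝ := (V x + V ((2:ℝ) • x' - x)) / 2 with hc
      have hcx : c ≤ V x' := by
        have := hVlow x' 0 le_rfl
        simpa using this
      set t : ℝ := t0 * ((V x' - c + 1) / δ) with hT
      have hlow0 : c ≤ V (x' + t0 • d) := hVlow x' t0 ht0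
      have harg : (1:ℝ) ≤ (V x' - c + 1) / δ := by
        rw [le_div_iff₀ hδpos, hδ]
        linarith
      have htt0 : t0 ≤ t := by
        nlinarith
      have htpos : 0 < t := lt_of_lt_of_le ht0' htt0
      have hid : x' + t0 • d = (1 - t0/t) • x' + (1 - (1 - t0/t)) • (x' + t • d) := by
        funext i
        simp [Pi.smul_apply, smul_eq_mul, Pi.add_apply]
        field_simp
        ring
      have hlam0 : 0 ≤ 1 - t0/t := by
        have : t0 / t ≤ 1 := (div_le_one htpos).2 htt0
        linarith
      have hlam1 : 1 - t0/t ≤ 1 := by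
        have : 0 ≤ t0 / t := div_nonneg ht0 htpos.le
        linarith
      have hconc := Vconc x' (x' + t • d) (1 - t0/t) hlam0 hlam1
      rw [← hid] at hconc
      -- hconc : (1 - t0/t) * V x' + (1 - (1 - t0/t)) * V (x' + t • d) ≤ V (x' + t0 • d)
      have hsimp : (1 - (1 - t0/t)) = t0/t := by ring
      have hlampos : 0 < t0 / t := div_pos ht0' htpos
      -- clear denominators in hconc
      have hconc' : (t - t0) * V x' + t0 * V (x' + t • d) ≤ t * V (x' + t0 • d) := by
        have h := mul_le_mul_of_nonneg_left hconc htpos.le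
        rw [show t * ((1 - t0/t) * V x' + (1 - (1 - t0/t)) * V (x' + t • d))
            = (t - t0) * V x' + t0 * V (x' + t • d) from by field_simp; try ring] at h
        exact h
      have htδ : t * δ = t0 * (V x' - c + 1) := by
        rw [hT]; field_simp
      have hBA : V (x' + t0 • d) = V x' - δ := by rw [hδ]; ring
      have hclow : c ≤ V (x' + t • d) := hVlow x' t htpos.le
      have hfin : t0 * V (x' + t • d) ≤ t0 * (c - 1) := by
        rw [hBA] at hconc'
        nlinarith [hconc', htδ]
      have : V (x' + t • d) ≤ c - 1 := le_of_mul_le_mul_left (by linarith) ht0'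
      linarith
    -- the recession condition gives d ≥ 0
    have hd0 : (0 : Fin I → ℝ) ≤ d := hVrecc d hVnondec
    -- contradiction via the constraint function U
    have hUlt : U (y - d) < U y := by
      apply hUstrict
      · intro i
        have hdi : (0:ℝ) ≤ d i := by simpa using hd0 i
        simp only [Pi.sub_apply]
        linarith
      · intro h
        exact hdne (sub_eq_self.mp h)
    set δU : ℝ := U y - U (y - d) with hδU
    have hδUpos : 0 < δU := by rw [hδU]; linarith
    set T : ℝ := max 1 ((U y - β) / δU + 1) with hTdef
    have hT1 : (1:ℝ) ≤ T := le_max_left _ _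
    have hTpos : (0:ℝ) < T := by linarith
    have hidU : y - d = (1 - 1/T) • y + (1 - (1 - 1/T)) • (y - T • d) := by
      funext i
      simp only [Pi.sub_apply, Pi.add_apply, Pi.smul_apply, smul_eq_mul]
      field_simp
      ring
    have hconcU := Uconc y (y - T • d) (1 - 1/T)
      (by have h1 : 1/T ≤ 1 := by rw [div_le_one hTpos]; exact hT1
          linarith)
      (by have h2 : 0 < 1/T := by positivity
          linarith)
    rw [← hidU] at hconcU
    have hconcU' : (T - 1) * U y + U (y - T • d) ≤ T * U (y - d) := by
      have h := mul_le_mul_of_nonneg_left hconcU hTpos.le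
      rw [show T * ((1 - 1/T) * U y + (1 - (1 - 1/T)) * U (y - T • d))
          = (T - 1) * U y + U (y - T • d) from by field_simp; try ring] at h
      exact h
    have hrayU : β ≤ U (y - T • d) := by
      have := (hray T (by linarith)).1
      simpa using this
    have hTbig : (U y - β) / δU + 1 ≤ T := le_max_right _ _
    have hbound : U y - β ≤ (T - 1) * δU := by
      have h1 : (U y - β) / δU ≤ T - 1 := by linarith
      calc U y - β = ((U y - β) / δU) * δU := by field_simp
        _ ≤ (T - 1) * δU := mul_le_mul_of_nonneg_right h1 hδUpos.le
    rw [hδU] at hbound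
    linarith
  -- S is compact, take the maximizer
  have hScpt : IsCompact S := Metric.isCompact_of_isClosed_isBounded hSclosed hSbdd
  obtain ⟨z0, hz0S, hz0max⟩ := hScpt.exists_isMaxOn ⟨0, hS0⟩
    ((hVcont.comp (continuous_const.add continuous_id)).continuousOn)
  have hmaxall : ∀ z' : Fin I → ℝ, β ≤ U (y - z') → V (x + z') ≤ V (x + z0) := by
    intro z' hz'
    by_cases hv : V x ≤ V (x + z')
    · exact hz0max ⟨hz', hv⟩
    · push_neg at hv
      have h0 : V (x + 0) ≤ V (x + z0) := hz0max hS0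
      simp only [add_zero] at h0
      linarith
  refine ⟨z0, ⟨hz0S.1, hmaxall⟩, ?_⟩
  intro z2 hz2
  obtain ⟨hf2, hm2⟩ := hz2
  have hMle : V (x + z0) ≤ V (x + z2) := hm2 z0 hz0S.1
  have hMeq : V (x + z2) = V (x + z0) := le_antisymm (hmaxall z2 hf2) hMle
  by_contra hne
  by_cases hequiv : ∃ t : ℝ, (x + z0) = (x + z2) + t • (1 : Fin I → ℝ)
  · obtain ⟨t, ht⟩ := hequiv
    rcases lt_trichotomy t 0 with htl | htl | htl
    · have hle : x + z0 ≤ x + z2 := by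
        intro i
        have := congrFun ht i
        simp only [Pi.add_apply, Pi.smul_apply, Pi.one_apply, smul_eq_mul, mul_one] at this
        simp only [Pi.add_apply]
        linarith [this]
      have hnee : x + z0 ≠ x + z2 := by
        intro h
        rw [h] at ht
        have := congrFun ht ⟨0, by omega⟩
        simp at this
        linarith
      have := hVstrict _ _ hle hnee
      linarith
    · apply hne
      rw [htl] at ht
      simp only [zero_smul, add_zero] at ht
      exact add_left_cancel ht.symm
    · have hle : x + z2 ≤ x + z0 := by
        intro i
        have := congrFun ht i
        simp only [Pi.add_apply, Pi.smul_apply, Pi.one_apply, smul_eq_mul, mul_one] at this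
        simp only [Pi.add_apply]
        linarith [this]
      have hnee : x + z2 ≠ x + z0 := by
        intro h
        rw [← h] at ht
        have := congrFun ht ⟨0, by omega⟩
        simp at this
        linarith
      have := hVstrict _ _ hle hnee
      linarith
  · have hstrict := hVsconc (x + z2) (x + z0) hequiv (1/2) (by norm_num) (by norm_num)
    set m : Fin I → ℝ := (1/2 : ℝ) • z2 + (1 - (1/2 : ℝ)) • z0 with hm
    have hmid : (1/2 : ℝ) • (x + z2) + (1 - (1/2 : ℝ)) • (x + z0) = x + m := by
      rw [hm]; module
    have hmfeas : β ≤ U (y - m) := by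
      rw [hm, idU]
      calc β = (1/2) * β + (1 - 1/2) * β := by ring
        _ ≤ (1/2) * U (y - z2) + (1 - 1/2) * U (y - z0) := by
            have := hz0S.1
            have h12 : (0:ℝ) ≤ 1/2 := by norm_num
            exact add_le_add (mul_le_mul_of_nonneg_left hf2 (by norm_num))
              (mul_le_mul_of_nonneg_left hz0S.1 (by norm_num))
        _ ≤ _ := Uconc _ _ (1/2) (by norm_num) (by norm_num)
    have hmle : V (x + m) ≤ V (x + z2) := hm2 m hmfeas
    rw [show (1 - (1/2:ℝ)) = 1/2 from by norm_num] at hstrict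
    rw [show ((1:ℝ)/2) • (x + z2) + ((1:ℝ)/2) • (x + z0) = x + m from by rw [hm]; module] at hstrict
    linarith
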